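/- For every Φ ∈ ℝ^{N×M} and all indices 1 ≤ i ≤ N, 1 ≤ m ≤ M, one has |Σ_{p=1}^{M} Σ_{q=1}^{M} conj(∂²(X(Φ)ᴴX(Φ))_{p,q}/∂Φ_{i,m}²) · ((X(Φ)ᴴX(Φ))_{p,q} − N δ_{pq})| ≤ 2(M−1)N, where δ_{pq} is the Kronecker delta. -/

import Mathlib

open Matrix

/-- The unimodular matrix `X(Φ)` with entries `exp(i Φ_{k,m})`. -/
noncomputable def Xmat {N M : ℕ} (Φ : Matrix (Fin N) (Fin M) ℝ) : Matrix (Fin N) (Fin M) ℂ :=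
  fun k m => Complex.exp (Complex.I * (Φ k m : ℂ))

/-- Replace the `(i,m)` entry of the phase matrix `Φ` by `t`. -/
def updE {N M : ℕ} (Φ : Matrix (Fin N) (Fin M) ℝ) (i : Fin N) (m : Fin M) (t : ℝ) :
    Matrix (Fin N) (Fin M) ℝ :=
  fun k l => if k = i ∧ l = m then t else Φ k l

lemma entry_eq {N M : ℕ} (Ψ : Matrix (Fin N) (Fin M) ℝ) (p q : Fin M) :
    ((Xmat Ψ)ᴴ * Xmat Ψ) p q
      = ∑ k : Fin N, Complex.exp (Complex.I * ((Ψ k q : ℂ) - (Ψ k p : ℂ))) := by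
  simp only [Matrix.mul_apply, Matrix.conjTranspose_apply, Xmat]
  refine Finset.sum_congr rfl fun k _ => ?_
  rw [show star (Complex.exp (Complex.I * (Ψ k p : ℂ)))
      = Complex.exp (starRingEnd ℂ (Complex.I * (Ψ k p : ℂ))) from (Complex.exp_conj _).symm,
    ← Complex.exp_add]
  congr 1
  simp [Complex.conj_I]
  ring

lemma entry_abs_le {N M : ℕ} (Ψ : Matrix (Fin N) (Fin M) ℝ) (p q : Fin M) :
    ‖((Xmat Ψ)ᴴ * Xmat Ψ) p q‖ ≤ (N : ℝ) := by
  rw [entry_eq]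
  calc ‖∑ k : Fin N, Complex.exp (Complex.I * ((Ψ k q : ℂ) - (Ψ k p : ℂ)))‖
      ≤ ∑ k : Fin N, ‖Complex.exp (Complex.I * ((Ψ k q : ℂ) - (Ψ k p : ℂ)))‖ :=
        norm_sum_le _ _
    _ = ∑ k : Fin N, 1 := by
        refine Finset.sum_congr rfl fun k _ => ?_
        rw [Complex.norm_exp]
        simp [Complex.mul_re]
    _ = (N : ℝ) := by simp

lemma entry_diag {N M : ℕ} (Ψ : Matrix (Fin N) (Fin M) ℝ) (p : Fin M) :
    ((Xmat Ψ)ᴴ * Xmat Ψ) p p = (N : ℂ) := by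
  rw [entry_eq]; simp

lemma deriv2_exp (Cc c d : ℂ) (t₀ : ℝ) :
    deriv (deriv (fun t : ℝ => Cc + c * Complex.exp (d * t))) t₀
      = c * d ^ 2 * Complex.exp (d * t₀) := by
  have key : ∀ (a b : ℂ) (t : ℝ),
      HasDerivAt (fun t : ℝ => a + b * Complex.exp (d * t)) (b * d * Complex.exp (d * t)) t := by
    intro a b t
    have h1 : HasDerivAt (fun t : ℝ => d * (t : ℂ)) d t := by
      simpa using (Complex.ofRealCLM.hasDerivAt (x := t)).const_mul d
    have h2 := (h1.cexp.const_mul b).const_add a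
    exact h2.congr_deriv (by ring)
  have e1 : deriv (fun t : ℝ => Cc + c * Complex.exp (d * t))
      = fun t : ℝ => 0 + (c * d) * Complex.exp (d * t) := by
    funext t
    rw [(key Cc c t).deriv]; ring
  rw [e1, (key 0 (c * d) t₀).deriv]; ring

lemma f_split {N M : ℕ} (Φ : Matrix (Fin N) (Fin M) ℝ) (i : Fin N) (m : Fin M) (p q : Fin M) :
    (fun t : ℝ => ((Xmat (updE Φ i m t))ᴴ * Xmat (updE Φ i m t)) p q)
      = fun t : ℝ => Complex.exp (Complex.I *
          ((if q = m then (t : ℂ) else (Φ i q : ℂ)) - (if p = m then (t : ℂ) else (Φ i p : ℂ))))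
        + ∑ k ∈ Finset.univ.erase i, Complex.exp (Complex.I * ((Φ k q : ℂ) - (Φ k p : ℂ))) := by
  funext t
  rw [entry_eq, ← Finset.add_sum_erase _ _ (Finset.mem_univ i)]
  congr 1
  · simp [updE, apply_ite (fun x : ℝ => (x : ℂ))]
  · refine Finset.sum_congr rfl fun k hk => ?_
    have hk' : k ≠ i := Finset.ne_of_mem_erase hk
    simp [updE, hk']

/-- `|Σ_{p,q} conj(∂²(X(Φ)ᴴX(Φ))_{p,q}/∂Φ_{i,m}²) · ((X(Φ)ᴴX(Φ))_{p,q} − N δ_{pq})| ≤ 2(M−1)N`. -/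
theorem stmt6 (N M : ℕ) (hN : 1 ≤ N) (hM : 1 ≤ M)
    (Φ : Matrix (Fin N) (Fin M) ℝ) (i : Fin N) (m : Fin M) :
    ‖∑ p : Fin M, ∑ q : Fin M,
      starRingEnd ℂ (deriv (deriv (fun t : ℝ =>
        ((Xmat (updE Φ i m t))ᴴ * Xmat (updE Φ i m t)) p q)) (Φ i m)) *
      (((Xmat Φ)ᴴ * Xmat Φ) p q - if p = q then (N : ℂ) else 0)‖
      ≤ 2 * ((M : ℝ) - 1) * (N : ℝ) := by
  have key : ∀ p q : Fin M,
      ‖(starRingEnd ℂ) (deriv (deriv (fun t : ℝ =>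
          ((Xmat (updE Φ i m t))ᴴ * Xmat (updE Φ i m t)) p q)) (Φ i m)) *
        (((Xmat Φ)ᴴ * Xmat Φ) p q - if p = q then (N : ℂ) else 0)‖
      ≤ (if p = m ∧ q ≠ m then (N : ℝ) else 0) + (if q = m ∧ p ≠ m then (N : ℝ) else 0) := by
    intro p q
    by_cases hpq : p = q
    · subst hpq
      simp [entry_diag]
    · have hE : ‖((Xmat Φ)ᴴ * Xmat Φ) p q - if p = q then (N : ℂ) else 0‖
          ≤ (N : ℝ) := by
        rw [if_neg hpq, sub_zero]; exact entry_abs_le Φ p q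
      by_cases hp : p = m
      · have hq : q ≠ m := fun h => hpq (hp.trans h.symm)
        have hf : (fun t : ℝ => ((Xmat (updE Φ i m t))ᴴ * Xmat (updE Φ i m t)) p q)
            = fun t : ℝ => (∑ k ∈ Finset.univ.erase i,
                Complex.exp (Complex.I * ((Φ k q : ℂ) - (Φ k p : ℂ))))
              + Complex.exp (Complex.I * (Φ i q : ℂ)) * Complex.exp ((-Complex.I) * t) := by
          rw [f_split]
          funext t
          rw [if_neg hq, if_pos hp,
            show Complex.I * ((Φ i q : ℂ) - (t : ℂ))
              = Complex.I * (Φ i q : ℂ) + (-Complex.I) * (t : ℂ) by ring, Complex.exp_add]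
          ring
        rw [hf, deriv2_exp, norm_mul, Complex.norm_conj]
        have h1 : ‖Complex.exp (Complex.I * (Φ i q : ℂ)) * (-Complex.I) ^ 2 *
            Complex.exp ((-Complex.I) * ((Φ i m : ℝ) : ℂ))‖ = 1 := by
          simp [Complex.norm_exp, Complex.mul_re]
        have hbnd : (if p = m ∧ q ≠ m then (N : ℝ) else 0)
            + (if q = m ∧ p ≠ m then (N : ℝ) else 0) = (N : ℝ) := by simp [hp, hq]
        rw [h1, one_mul, hbnd]
        exact hE
      · by_cases hq : q = m
        · 
          have hf : (fun t : ℝ => ((Xmat (updE Φ i m t))ᴴ * Xmat (updE Φ i m t)) p q)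
              = fun t : ℝ => (∑ k ∈ Finset.univ.erase i,
                  Complex.exp (Complex.I * ((Φ k q : ℂ) - (Φ k p : ℂ))))
                + Complex.exp ((-Complex.I) * (Φ i p : ℂ)) * Complex.exp (Complex.I * t) := by
            rw [f_split]
            funext t
            rw [if_pos hq, if_neg hp,
              show Complex.I * ((t : ℂ) - (Φ i p : ℂ))
                = (-Complex.I) * (Φ i p : ℂ) + Complex.I * (t : ℂ) by ring, Complex.exp_add]
            ring
          rw [hf, deriv2_exp, norm_mul, Complex.norm_conj]
          have h1 : ‖Complex.exp ((-Complex.I) * (Φ i p : ℂ)) * Complex.I ^ 2 *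
              Complex.exp (Complex.I * ((Φ i m : ℝ) : ℂ))‖ = 1 := by
            simp [Complex.norm_exp, Complex.mul_re]
          have hbnd : (if p = m ∧ q ≠ m then (N : ℝ) else 0)
              + (if q = m ∧ p ≠ m then (N : ℝ) else 0) = (N : ℝ) := by simp [hp, hq]
          rw [h1, one_mul, hbnd]
          exact hE
        · have hf : (fun t : ℝ => ((Xmat (updE Φ i m t))ᴴ * Xmat (updE Φ i m t)) p q)
              = fun _ : ℝ => Complex.exp (Complex.I * ((Φ i q : ℂ) - (Φ i p : ℂ)))
                + ∑ k ∈ Finset.univ.erase i,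
                    Complex.exp (Complex.I * ((Φ k q : ℂ) - (Φ k p : ℂ))) := by
            rw [f_split]
            funext t
            rw [if_neg hq, if_neg hp]
          rw [hf]
          simp [deriv_const', hp, hq]
  have hA : ∀ r : ℝ, ∑ q : Fin M, (if q = m then (0 : ℝ) else r) = ((M : ℝ) - 1) * r := by
    intro r
    have e : ∀ q : Fin M, (if q = m then (0 : ℝ) else r) = r - (if q = m then r else 0) := by
      intro q; split <;> simp
    rw [Finset.sum_congr rfl fun q _ => e q, Finset.sum_sub_distrib, Finset.sum_const,
      Finset.sum_ite_eq' Finset.univ m]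
    simp
    ring
  calc ‖∑ p : Fin M, ∑ q : Fin M,
      starRingEnd ℂ (deriv (deriv (fun t : ℝ =>
        ((Xmat (updE Φ i m t))ᴴ * Xmat (updE Φ i m t)) p q)) (Φ i m)) *
      (((Xmat Φ)ᴴ * Xmat Φ) p q - if p = q then (N : ℂ) else 0)‖
      ≤ ∑ p : Fin M, ∑ q : Fin M, ‖
          starRingEnd ℂ (deriv (deriv (fun t : ℝ =>
            ((Xmat (updE Φ i m t))ᴴ * Xmat (updE Φ i m t)) p q)) (Φ i m)) *
          (((Xmat Φ)ᴴ * Xmat Φ) p q - if p = q then (N : ℂ) else 0)‖ :=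
        le_trans (norm_sum_le _ _)
          (Finset.sum_le_sum fun p _ => norm_sum_le _ _)
    _ ≤ ∑ p : Fin M, ∑ q : Fin M,
          ((if p = m ∧ q ≠ m then (N : ℝ) else 0) + (if q = m ∧ p ≠ m then (N : ℝ) else 0)) :=
        Finset.sum_le_sum fun p _ => Finset.sum_le_sum fun q _ => key p q
    _ = 2 * ((M : ℝ) - 1) * (N : ℝ) := by
        have e1 : ∀ p : Fin M, (∑ q : Fin M, if p = m ∧ q ≠ m then (N : ℝ) else 0)
            = if p = m then ((M : ℝ) - 1) * (N : ℝ) else 0 := by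
          intro p
          by_cases hp : p = m
          · rw [if_pos hp, ← hA (N : ℝ)]
            refine Finset.sum_congr rfl fun q _ => ?_
            by_cases hq : q = m <;> simp [hq, hp]
          · simp [hp]
        have e2 : ∀ p : Fin M, (∑ q : Fin M, if q = m ∧ p ≠ m then (N : ℝ) else 0)
            = if p = m then 0 else (N : ℝ) := by
          intro p
          by_cases hp : p = m
          · simp [hp]
          · rw [if_neg hp]
            have e : ∀ q : Fin M, (if q = m ∧ p ≠ m then (N : ℝ) else 0)
                = if q = m then (N : ℝ) else 0 := fun q => by simp [hp]
            rw [Finset.sum_congr rfl fun q _ => e q, Finset.sum_ite_eq' Finset.univ m]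
            simp
        have : ∀ p : Fin M, (∑ q : Fin M,
            ((if p = m ∧ q ≠ m then (N : ℝ) else 0) + (if q = m ∧ p ≠ m then (N : ℝ) else 0)))
            = (if p = m then ((M : ℝ) - 1) * (N : ℝ) else 0) + (if p = m then 0 else (N : ℝ)) := by
          intro p
          rw [Finset.sum_add_distrib, e1, e2]
        rw [Finset.sum_congr rfl fun p _ => this p, Finset.sum_add_distrib,
          Finset.sum_ite_eq' Finset.univ m, hA (N : ℝ)]
        simp
        ring
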